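/- Let b, c, d > 0 and let X_1, X_2, … be independent [0,1]-valued random variables with common mean μ, and μ̂_t = (1/t)∑_{s=1}^t X_s. Then for every n, ∑_{t=1}^n P(μ̂_t − μ ≥ b − √(cd/t)) ≤ 1 + (1/b²)(cd + √(πcd/2) + 1/2). -/

import Mathlib

open MeasureTheory ProbabilityTheory Real

lemma key_ineq (p x : ℝ) (hp0 : 0 ≤ p) (hp1 : p ≤ 1) :
    1 - p + p * Real.exp x ≤ Real.exp (p * x + x ^ 2 / 8) := by
  rcases eq_or_lt_of_le hp0 with h0 | h0
  · simp only [← h0]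
    simpa using Real.one_le_exp (by positivity)
  rcases eq_or_lt_of_le hp1 with h1 | h1
  · simp only [h1]
    simpa using Real.exp_le_exp.mpr (by nlinarith [sq_nonneg x] : x ≤ 1 * x + x ^ 2 / 8)
  -- 0 < p < 1
  set g : ℝ → ℝ := fun y => 1 - p + p * Real.exp y with hgdef
  have hgpos : ∀ y, 0 < g y := fun y => by
    have := Real.exp_pos y; simp only [hgdef]; nlinarith
  set f : ℝ → ℝ := fun y => p * y + y ^ 2 / 8 - Real.log (g y) with hfdef
  set f' : ℝ → ℝ := fun y => p + y / 4 - p * Real.exp y / g y with hf'def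
  have hgd : ∀ y, HasDerivAt g (p * Real.exp y) y := by
    intro y
    exact ((Real.hasDerivAt_exp y).const_mul p).const_add (1 - p)
  have hdf : ∀ y, HasDerivAt f (f' y) y := by
    intro y
    have h1 : HasDerivAt (fun y : ℝ => p * y + y ^ 2 / 8) (p + y / 4) y := by
      have := ((hasDerivAt_pow 2 y).div_const 8).const_add (p * y)
      have h2 : HasDerivAt (fun z : ℝ => p * z) p y := by
        simpa using (hasDerivAt_id y).const_mul p
      have h3 := h2.add ((hasDerivAt_pow 2 y).div_const 8)
      refine h3.congr_deriv ?_
      ring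
    have hlog : HasDerivAt (fun y => Real.log (g y)) (p * Real.exp y / g y) y :=
      (hgd y).log (hgpos y).ne'
    exact h1.sub hlog
  have hdf' : ∀ y, HasDerivAt f' (1 / 4 - p * Real.exp y * (1 - p) / g y ^ 2) y := by
    intro y
    have hq : HasDerivAt (fun y => p * Real.exp y / g y)
        ((p * Real.exp y * g y - p * Real.exp y * (p * Real.exp y)) / g y ^ 2) y :=
      ((Real.hasDerivAt_exp y).const_mul p).div (hgd y) (hgpos y).ne'
    have h1 : HasDerivAt (fun y : ℝ => p + y / 4) (1 / 4) y := by
      simpa using ((hasDerivAt_id y).div_const 4).const_add p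
    have := h1.sub hq
    refine this.congr_deriv ?_
    have hgy : g y = 1 - p + p * Real.exp y := rfl
    field_simp [(hgpos y).ne']
    ring
  have hf'mono : Monotone f' := by
    refine monotone_of_deriv_nonneg (fun y => (hdf' y).differentiableAt) ?_
    intro y
    rw [(hdf' y).deriv]
    rw [sub_nonneg, div_le_iff₀ (pow_pos (hgpos y) 2)]
    have hgy : g y = 1 - p + p * Real.exp y := rfl
    nlinarith [sq_nonneg (1 - p - p * Real.exp y), Real.exp_pos y]
  have hf'0 : f' 0 = 0 := by
    have : g 0 = 1 := by simp [hgdef]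
    simp [hf'def, this]
  have hf0 : f 0 = 0 := by
    have : g 0 = 1 := by simp [hgdef]
    simp [hfdef, this]
  have hfx : 0 ≤ f x := by
    have hcont : Continuous f := by
      have : Differentiable ℝ f := fun y => (hdf y).differentiableAt
      exact this.continuous
    rcases le_total 0 x with hx | hx
    · have hmono : MonotoneOn f (Set.Ici 0) := by
        refine monotoneOn_of_deriv_nonneg (convex_Ici 0) hcont.continuousOn
          (fun y _ => (hdf y).differentiableAt.differentiableWithinAt) ?_
        intro y hy
        rw [(hdf y).deriv]
        rw [interior_Ici] at hy
        calc (0:ℝ) = f' 0 := hf'0.symm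
          _ ≤ f' y := hf'mono (le_of_lt hy)
      calc (0:ℝ) = f 0 := hf0.symm
        _ ≤ f x := hmono (Set.self_mem_Ici) hx hx
    · have hanti : AntitoneOn f (Set.Iic 0) := by
        refine antitoneOn_of_deriv_nonpos (convex_Iic 0) hcont.continuousOn
          (fun y _ => (hdf y).differentiableAt.differentiableWithinAt) ?_
        intro y hy
        rw [(hdf y).deriv]
        rw [interior_Iic] at hy
        calc f' y ≤ f' 0 := hf'mono (le_of_lt hy)
          _ = 0 := hf'0
      calc (0:ℝ) = f 0 := hf0.symm
        _ ≤ f x := hanti hx (Set.self_mem_Iic) hx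
  have hlog : Real.log (g x) ≤ p * x + x ^ 2 / 8 := by
    have : f x = p * x + x ^ 2 / 8 - Real.log (g x) := rfl
    linarith [hfx, this ▸ hfx]
  calc 1 - p + p * Real.exp x = g x := rfl
    _ = Real.exp (Real.log (g x)) := (Real.exp_log (hgpos x)).symm
    _ ≤ Real.exp (p * x + x ^ 2 / 8) := Real.exp_le_exp.mpr hlog

lemma integrable_exp_comp {Ω : Type*} [MeasurableSpace Ω] (μ : Measure Ω)
    [IsProbabilityMeasure μ] (X : Ω → ℝ) (hX : Measurable X)
    (hr : ∀ ω, X ω ∈ Set.Icc (0:ℝ) 1) (lam : ℝ) :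
    Integrable (fun ω => Real.exp (lam * X ω)) μ := by
  refine Integrable.mono' (integrable_const (Real.exp |lam|))
    ((hX.const_mul lam).exp.aestronglyMeasurable) (ae_of_all _ fun ω => ?_)
  rw [Real.norm_eq_abs, abs_of_pos (Real.exp_pos _), Real.exp_le_exp]
  rcases (hr ω) with ⟨h0, h1⟩
  calc lam * X ω ≤ |lam * X ω| := le_abs_self _
    _ = |lam| * |X ω| := abs_mul _ _
    _ ≤ |lam| * 1 := by
        refine mul_le_mul_of_nonneg_left ?_ (abs_nonneg _)
        rw [abs_of_nonneg h0]; exact h1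
    _ = |lam| := mul_one _

lemma integrable_of_range {Ω : Type*} [MeasurableSpace Ω] (μ : Measure Ω)
    [IsProbabilityMeasure μ] (X : Ω → ℝ) (hX : Measurable X)
    (hr : ∀ ω, X ω ∈ Set.Icc (0:ℝ) 1) : Integrable X μ := by
  refine Integrable.mono' (integrable_const 1) hX.aestronglyMeasurable
    (ae_of_all _ fun ω => ?_)
  rw [Real.norm_eq_abs, abs_of_nonneg (hr ω).1]; exact (hr ω).2

lemma mgf_le' {Ω : Type*} [MeasurableSpace Ω] (μ : Measure Ω) [IsProbabilityMeasure μ]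
    (X : Ω → ℝ) (hX : Measurable X) (hr : ∀ ω, X ω ∈ Set.Icc (0:ℝ) 1) (lam : ℝ) :
    ∫ ω, Real.exp (lam * X ω) ∂μ ≤ Real.exp (lam * (∫ ω, X ω ∂μ) + lam ^ 2 / 8) := by
  have hXi : Integrable X μ := integrable_of_range μ X hX hr
  set m := ∫ ω, X ω ∂μ with hm
  have hm0 : 0 ≤ m := integral_nonneg fun ω => (hr ω).1
  have hm1 : m ≤ 1 := by
    calc m ≤ ∫ _ω, (1:ℝ) ∂μ := integral_mono hXi (integrable_const 1) fun ω => (hr ω).2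
      _ = 1 := by simp
  have hpt : ∀ ω, Real.exp (lam * X ω) ≤ 1 - X ω + X ω * Real.exp lam := by
    intro ω
    have h := convexOn_exp.2 (Set.mem_univ (0:ℝ)) (Set.mem_univ lam)
      (by linarith [(hr ω).2] : (0:ℝ) ≤ 1 - X ω) (hr ω).1 (by ring)
    simp only [smul_eq_mul, mul_zero, zero_add, Real.exp_zero, mul_one] at h
    rw [mul_comm]
    exact h
  calc ∫ ω, Real.exp (lam * X ω) ∂μ
      ≤ ∫ ω, (1 - X ω + X ω * Real.exp lam) ∂μ := by
        refine integral_mono (integrable_exp_comp μ X hX hr lam) ?_ hpt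
        exact ((integrable_const 1).sub hXi).add (hXi.mul_const _)
    _ = 1 - m + m * Real.exp lam := by
        have i1 : Integrable (fun ω => (1:ℝ) - X ω) μ := (integrable_const 1).sub hXi
        have e1 : ∫ ω, ((1 - X ω) + X ω * Real.exp lam) ∂μ
            = (∫ ω, ((1:ℝ) - X ω) ∂μ) + ∫ ω, X ω * Real.exp lam ∂μ :=
          integral_add i1 (hXi.mul_const _)
        have e2 : ∫ ω, ((1:ℝ) - X ω) ∂μ = 1 - m := by
          rw [integral_sub (integrable_const 1) hXi]; simp [hm]
        rw [e1, e2, integral_mul_const]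
    _ ≤ Real.exp (m * lam + lam ^ 2 / 8) := key_ineq m lam hm0 hm1
    _ = Real.exp (lam * m + lam ^ 2 / 8) := by rw [mul_comm m lam]

lemma hoeffding_sum {Ω : Type*} [MeasurableSpace Ω] (μ : Measure Ω) [IsProbabilityMeasure μ]
    (X : ℕ → Ω → ℝ) (hmeas : ∀ t, Measurable (X t))
    (hindep : iIndepFun X μ)
    (hrange : ∀ t ω, X t ω ∈ Set.Icc (0:ℝ) 1)
    (m : ℝ) (hmean : ∀ t, ∫ ω, X t ω ∂μ = m)
    (t : ℕ) (ht : 0 < t) (ε : ℝ) (hε : 0 ≤ ε) :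
    (μ {ω | (1 / (t : ℝ)) * ∑ s ∈ Finset.range t, X s ω - m ≥ ε}).toReal ≤
      Real.exp (-2 * t * ε ^ 2) := by
  have htpos : (0:ℝ) < t := Nat.cast_pos.mpr ht
  set lam := 4 * ε with hlam
  have hset : {ω | (1 / (t : ℝ)) * ∑ s ∈ Finset.range t, X s ω - m ≥ ε}
      = {ω | (t:ℝ) * (m + ε) ≤ (∑ s ∈ Finset.range t, X s) ω} := by
    ext ω
    simp only [Set.mem_setOf_eq, Finset.sum_apply, ge_iff_le]
    rw [le_sub_iff_add_le, one_div, inv_mul_eq_div, le_div_iff₀ htpos]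
    constructor <;> intro h <;> nlinarith
  rw [hset]
  have hintS : Integrable (fun ω => Real.exp (lam * (∑ s ∈ Finset.range t, X s) ω)) μ :=
    hindep.integrable_exp_mul_sum hmeas
      (fun i _ => integrable_exp_comp μ (X i) (hmeas i) (hrange i) lam)
  have hchernoff := measure_ge_le_exp_mul_mgf (μ := μ) (X := ∑ s ∈ Finset.range t, X s)
    ((t:ℝ) * (m + ε)) (by positivity) hintS
  refine hchernoff.trans ?_
  have hmgf : mgf (∑ s ∈ Finset.range t, X s) μ lam
      = ∏ s ∈ Finset.range t, mgf (X s) μ lam := hindep.mgf_sum hmeas _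
  have hbound : ∀ s ∈ Finset.range t,
      mgf (X s) μ lam ≤ Real.exp (lam * m + lam ^ 2 / 8) := by
    intro s _
    have := mgf_le' μ (X s) (hmeas s) (hrange s) lam
    rwa [hmean s] at this
  calc Real.exp (-lam * ((t:ℝ) * (m + ε))) * mgf (∑ s ∈ Finset.range t, X s) μ lam
      ≤ Real.exp (-lam * ((t:ℝ) * (m + ε))) * Real.exp (lam * m + lam ^ 2 / 8) ^ t := by
        refine mul_le_mul_of_nonneg_left ?_ (Real.exp_pos _).le
        rw [hmgf]
        calc ∏ s ∈ Finset.range t, mgf (X s) μ lam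
            ≤ ∏ _s ∈ Finset.range t, Real.exp (lam * m + lam ^ 2 / 8) :=
              Finset.prod_le_prod (fun s _ => mgf_nonneg) hbound
          _ = Real.exp (lam * m + lam ^ 2 / 8) ^ t := by
              rw [Finset.prod_const, Finset.card_range]
    _ = Real.exp (-lam * ((t:ℝ) * (m + ε)) + t * (lam * m + lam ^ 2 / 8)) := by
        rw [← Real.exp_nat_mul, ← Real.exp_add]
    _ ≤ Real.exp (-2 * t * ε ^ 2) := by
        apply Real.exp_le_exp.mpr
        rw [hlam]; ring_nf; exact le_refl _

lemma tail_sum_le (b c d : ℝ) (hb : 0 < b) (hc : 0 < c) (hd : 0 < d) (T n : ℕ)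
    (hT1 : 1 ≤ T) (hTge : c * d / b ^ 2 ≤ T) :
    ∑ t ∈ Finset.Icc (T + 1) n,
        Real.exp (-2 * (b * Real.sqrt t - Real.sqrt (c * d)) ^ 2)
      ≤ 1 / b ^ 2 * (Real.sqrt (π * c * d / 2) + 1 / 2) := by
  have hrhs_nonneg : 0 ≤ 1 / b ^ 2 * (Real.sqrt (π * c * d / 2) + 1 / 2) := by positivity
  rcases le_or_gt n T with hn | hTn
  · rw [Finset.Icc_eq_empty (by omega), Finset.sum_empty]; exact hrhs_nonneg
  set r := Real.sqrt (c * d) with hrdef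
  have hr0 : 0 ≤ r := Real.sqrt_nonneg _
  set φ : ℝ → ℝ := fun s => Real.exp (-2 * (b * Real.sqrt s - r) ^ 2) with hφdef
  have hφcont : Continuous φ := by
    apply Real.continuous_exp.comp
    fun_prop
  have hφnonneg : ∀ s, 0 ≤ φ s := fun s => (Real.exp_pos _).le
  -- b * sqrt x ≥ r for x ≥ T
  have hkey : ∀ x : ℝ, (T:ℝ) ≤ x → r ≤ b * Real.sqrt x := by
    intro x hx
    have h1 : c * d ≤ b ^ 2 * x := by
      have h2 : c * d ≤ b ^ 2 * (T:ℝ) := by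
        rw [div_le_iff₀ (by positivity)] at hTge; linarith
      nlinarith
    calc r = Real.sqrt (c * d) := rfl
      _ ≤ Real.sqrt (b ^ 2 * x) := Real.sqrt_le_sqrt h1
      _ = b * Real.sqrt x := by
          rw [Real.sqrt_mul (sq_nonneg b), Real.sqrt_sq hb.le]
  have hanti : AntitoneOn φ (Set.Ici (T:ℝ)) := by
    intro x hx y hy hxy
    apply Real.exp_le_exp.mpr
    have h1 : r ≤ b * Real.sqrt x := hkey x hx
    have h2 : b * Real.sqrt x ≤ b * Real.sqrt y :=
      mul_le_mul_of_nonneg_left (Real.sqrt_le_sqrt hxy) hb.le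
    nlinarith
  have hint : ∀ a₁ a₂ : ℝ, IntervalIntegrable φ volume a₁ a₂ :=
    fun a₁ a₂ => hφcont.intervalIntegrable a₁ a₂
  have hT0 : (0:ℝ) < T := by exact_mod_cast hT1
  -- termwise comparison with integral
  have hterm : ∀ t ∈ Finset.Icc (T + 1) n, φ t ≤ ∫ s in ((t:ℝ) - 1)..(t:ℝ), φ s := by
    intro t htmem
    rw [Finset.mem_Icc] at htmem
    have h1 : (T:ℝ) ≤ (t:ℝ) - 1 := by
      have : (T:ℝ) + 1 ≤ (t:ℝ) := by exact_mod_cast htmem.1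
      linarith
    have h2 : ((t:ℝ) - 1) ≤ (t:ℝ) := by linarith
    calc φ t = ∫ _s in ((t:ℝ) - 1)..(t:ℝ), φ t := by
          rw [intervalIntegral.integral_const]; simp
      _ ≤ ∫ s in ((t:ℝ) - 1)..(t:ℝ), φ s := by
          refine intervalIntegral.integral_mono_on h2
            (intervalIntegrable_const) (hint _ _) (fun x hx => ?_)
          exact hanti (Set.mem_Ici.mpr (le_trans h1 hx.1))
            (Set.mem_Ici.mpr (by linarith)) hx.2
  have hsum1 : ∑ t ∈ Finset.Icc (T + 1) n, φ t
      ≤ ∑ t ∈ Finset.Icc (T + 1) n, ∫ s in ((t:ℝ) - 1)..(t:ℝ), φ s :=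
    Finset.sum_le_sum hterm
  -- telescoping
  have htel : ∑ t ∈ Finset.Icc (T + 1) n, (∫ s in ((t:ℝ) - 1)..(t:ℝ), φ s)
      = ∫ s in (T:ℝ)..(n:ℝ), φ s := by
    have hre : ∑ t ∈ Finset.Icc (T + 1) n, (∫ s in ((t:ℝ) - 1)..(t:ℝ), φ s)
        = ∑ k ∈ Finset.range (n - T), ∫ s in (((T:ℝ) + k))..((T:ℝ) + (k + 1)), φ s := by
      rw [← Finset.Ico_add_one_right_eq_Icc, Finset.sum_Ico_eq_sum_range]
      have hcount : n + 1 - (T + 1) = n - T := by omega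
      rw [hcount]
      refine Finset.sum_congr rfl (fun k _ => ?_)
      have e1 : ((T + 1 + k : ℕ) : ℝ) - 1 = (T:ℝ) + k := by push_cast; ring
      have e2 : ((T + 1 + k : ℕ) : ℝ) = (T:ℝ) + (k + 1) := by push_cast; ring
      rw [e1, e2]
    rw [hre]
    have := intervalIntegral.sum_integral_adjacent_intervals
      (a := fun k : ℕ => (T:ℝ) + k) (n := n - T) (f := φ) (μ := volume)
      (fun k _ => hint _ _)
    simp only [Nat.cast_zero, add_zero] at this
    have hend : (T:ℝ) + ((n - T : ℕ):ℝ) = (n:ℝ) := by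
      rw [Nat.cast_sub hTn.le]; ring
    rw [hend] at this
    rw [← this]
    refine Finset.sum_congr rfl (fun k _ => ?_)
    push_cast
    ring_nf
  -- substitution and gaussian bound
  have hTn' : (T:ℝ) ≤ (n:ℝ) := by exact_mod_cast hTn.le
  set F : ℝ → ℝ := fun u => 2 / b ^ 2 * ((u + r) * Real.exp (-2 * u ^ 2)) with hFdef
  have hFcont : Continuous F := by fun_prop
  set f : ℝ → ℝ := fun s => b * Real.sqrt s - r with hfdef
  set f' : ℝ → ℝ := fun s => b / (2 * Real.sqrt s) with hf'def
  have huIcc : Set.uIcc (T:ℝ) (n:ℝ) = Set.Icc (T:ℝ) (n:ℝ) := Set.uIcc_of_le hTn'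
  have hmem_pos : ∀ x ∈ Set.uIcc (T:ℝ) (n:ℝ), 0 < x := by
    intro x hx; rw [huIcc] at hx; exact lt_of_lt_of_le hT0 hx.1
  have hderiv : ∀ x ∈ Set.uIcc (T:ℝ) (n:ℝ), HasDerivAt f (f' x) x := by
    intro x hx
    have hx0 : x ≠ 0 := (hmem_pos x hx).ne'
    have h2 := ((Real.hasDerivAt_sqrt hx0).const_mul b).sub_const r
    refine h2.congr_deriv ?_
    rw [hf'def]; field_simp
  have hf'cont : ContinuousOn f' (Set.uIcc (T:ℝ) (n:ℝ)) := by
    refine ContinuousOn.div continuousOn_const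
      ((continuous_const.mul Real.continuous_sqrt).continuousOn) (fun x hx => ?_)
    have h1 := hmem_pos x hx
    have h2 : 0 < Real.sqrt x := Real.sqrt_pos.mpr h1
    positivity
  have hsubst : ∫ s in (T:ℝ)..(n:ℝ), φ s = ∫ u in (f (T:ℝ))..(f (n:ℝ)), F u := by
    rw [← intervalIntegral.integral_comp_smul_deriv hderiv hf'cont hFcont]
    refine intervalIntegral.integral_congr (fun x hx => ?_)
    have hx0 : 0 < x := hmem_pos x hx
    have hsx : 0 < Real.sqrt x := Real.sqrt_pos.mpr hx0
    show φ x = f' x • (F ∘ f) x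
    simp only [smul_eq_mul, Function.comp, hFdef, hfdef, hf'def, hφdef]
    have he : b * Real.sqrt x - r + r = b * Real.sqrt x := by ring
    rw [he]
    field_simp
  set u₀ := f (T:ℝ) with hu0
  set u₁ := f (n:ℝ) with hu1
  have hu0_nonneg : 0 ≤ u₀ := by
    rw [hu0, hfdef]; simp only [sub_nonneg]; exact hkey (T:ℝ) le_rfl
  have hu01 : u₀ ≤ u₁ := by
    rw [hu0, hu1, hfdef]
    have h1 : Real.sqrt (T:ℝ) ≤ Real.sqrt (n:ℝ) := Real.sqrt_le_sqrt hTn'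
    simp only
    nlinarith
  have hI1 : ∫ u in u₀..u₁, u * Real.exp (-2 * u ^ 2) ≤ 1 / 4 := by
    have hH : ∀ u : ℝ, HasDerivAt (fun v : ℝ => -(Real.exp (-2 * v ^ 2) / 4))
        (u * Real.exp (-2 * u ^ 2)) u := by
      intro u
      have h1 : HasDerivAt (fun v : ℝ => -2 * v ^ 2) (-4 * u) u := by
        have := (hasDerivAt_pow 2 u).const_mul (-2)
        refine this.congr_deriv ?_
        push_cast; ring
      have h3 := (h1.exp.div_const 4).neg
      refine h3.congr_deriv ?_; ring
    rw [intervalIntegral.integral_eq_sub_of_hasDerivAt (fun u _ => hH u)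
      (Continuous.intervalIntegrable (by fun_prop) _ _)]
    have e0 : Real.exp (-2 * u₀ ^ 2) ≤ 1 := by
      calc Real.exp (-2 * u₀ ^ 2) ≤ Real.exp 0 :=
            Real.exp_le_exp.mpr (by nlinarith [sq_nonneg u₀])
        _ = 1 := Real.exp_zero
    have e1 : 0 < Real.exp (-2 * u₁ ^ 2) := Real.exp_pos _
    linarith
  have hI2 : ∫ u in u₀..u₁, Real.exp (-2 * u ^ 2) ≤ Real.sqrt (π / 2) / 2 := by
    rw [intervalIntegral.integral_of_le hu01]
    have hsub : Set.Ioc u₀ u₁ ⊆ Set.Ioi (0:ℝ) := fun x hx =>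
      Set.mem_Ioi.mpr (lt_of_le_of_lt hu0_nonneg hx.1)
    calc ∫ u in Set.Ioc u₀ u₁, Real.exp (-2 * u ^ 2)
        ≤ ∫ u in Set.Ioi (0:ℝ), Real.exp (-2 * u ^ 2) := by
          refine setIntegral_mono_set
            ((integrable_exp_neg_mul_sq (by norm_num : (0:ℝ) < 2)).integrableOn)
            (ae_of_all _ fun u => (Real.exp_pos _).le)
            (HasSubset.Subset.eventuallyLE hsub)
      _ = Real.sqrt (π / 2) / 2 := integral_gaussian_Ioi 2
  have hF : ∫ u in u₀..u₁, F u ≤ 1 / b ^ 2 * (Real.sqrt (π * c * d / 2) + 1 / 2) := by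
    have hsplit : ∫ u in u₀..u₁, F u
        = 2 / b ^ 2 * ((∫ u in u₀..u₁, u * Real.exp (-2 * u ^ 2))
            + r * ∫ u in u₀..u₁, Real.exp (-2 * u ^ 2)) := by
      rw [hFdef]
      rw [intervalIntegral.integral_const_mul]
      congr 1
      have he : ∀ u : ℝ, (u + r) * Real.exp (-2 * u ^ 2)
          = u * Real.exp (-2 * u ^ 2) + r * Real.exp (-2 * u ^ 2) := fun u => by ring
      simp_rw [he]
      rw [intervalIntegral.integral_add
        ((by fun_prop : Continuous fun u : ℝ => u * Real.exp (-2 * u ^ 2)).intervalIntegrable _ _)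
        ((by fun_prop : Continuous fun u : ℝ => r * Real.exp (-2 * u ^ 2)).intervalIntegrable _ _),
        intervalIntegral.integral_const_mul]
    rw [hsplit]
    have hrs : r * Real.sqrt (π / 2) = Real.sqrt (π * c * d / 2) := by
      rw [hrdef, ← Real.sqrt_mul (by positivity)]
      congr 1; ring
    calc 2 / b ^ 2 * ((∫ u in u₀..u₁, u * Real.exp (-2 * u ^ 2))
            + r * ∫ u in u₀..u₁, Real.exp (-2 * u ^ 2))
        ≤ 2 / b ^ 2 * (1 / 4 + r * (Real.sqrt (π / 2) / 2)) := by
          have h2b : 0 ≤ 2 / b ^ 2 := by positivity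
          refine mul_le_mul_of_nonneg_left ?_ h2b
          have := mul_le_mul_of_nonneg_left hI2 hr0
          linarith
      _ = 1 / b ^ 2 * (Real.sqrt (π * c * d / 2) + 1 / 2) := by
          rw [← hrs]; field_simp; ring
  calc ∑ t ∈ Finset.Icc (T + 1) n, φ t
      ≤ ∑ t ∈ Finset.Icc (T + 1) n, ∫ s in ((t:ℝ) - 1)..(t:ℝ), φ s := hsum1
    _ = ∫ s in (T:ℝ)..(n:ℝ), φ s := htel
    _ = ∫ u in u₀..u₁, F u := hsubst
    _ ≤ 1 / b ^ 2 * (Real.sqrt (π * c * d / 2) + 1 / 2) := hF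

lemma toReal_prob_le_one {Ω : Type*} [MeasurableSpace Ω] (μ : Measure Ω)
    [IsProbabilityMeasure μ] (s : Set Ω) : (μ s).toReal ≤ 1 := by
  simpa using ENNReal.toReal_mono ENNReal.one_ne_top (prob_le_one (μ := μ) (s := s))

theorem sum_prob_bound
    {Ω : Type*} [MeasurableSpace Ω] (μ : Measure Ω) [IsProbabilityMeasure μ]
    (b c d : ℝ) (hb : 0 < b) (hc : 0 < c) (hd : 0 < d)
    (X : ℕ → Ω → ℝ) (hmeas : ∀ t, Measurable (X t))
    (hindep : iIndepFun X μ)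
    (hrange : ∀ t ω, X t ω ∈ Set.Icc (0:ℝ) 1)
    (m : ℝ) (hmean : ∀ t, ∫ ω, X t ω ∂μ = m) (n : ℕ) :
    ∑ t ∈ Finset.Icc 1 n,
        (μ {ω | (1 / (t : ℝ)) * ∑ s ∈ Finset.range t, X s ω - m ≥
            b - Real.sqrt (c * d / t)}).toReal ≤
      1 + (1 / b ^ 2) * (c * d + Real.sqrt (π * c * d / 2) + 1 / 2) := by
  classical
  set T : ℕ := ⌈c * d / b ^ 2⌉₊ with hTdef
  have hcd : 0 < c * d / b ^ 2 := by positivity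
  have hT1 : 1 ≤ T := by
    rw [hTdef]
    exact Nat.one_le_iff_ne_zero.mpr (by positivity)
  have hTge : c * d / b ^ 2 ≤ (T:ℝ) := Nat.le_ceil _
  have hTle : (T:ℝ) ≤ c * d / b ^ 2 + 1 := (Nat.ceil_lt_add_one hcd.le).le
  set P : ℕ → ℝ := fun t =>
    (μ {ω | (1 / (t : ℝ)) * ∑ s ∈ Finset.range t, X s ω - m ≥
        b - Real.sqrt (c * d / t)}).toReal with hPdef
  rw [← Finset.sum_filter_add_sum_filter_not (Finset.Icc 1 n) (fun t => t ≤ T)]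
  have hhead : ∑ t ∈ (Finset.Icc 1 n).filter (fun t => t ≤ T), P t ≤ (T:ℝ) := by
    calc ∑ t ∈ (Finset.Icc 1 n).filter (fun t => t ≤ T), P t
        ≤ ∑ _t ∈ (Finset.Icc 1 n).filter (fun t => t ≤ T), (1:ℝ) := by
          refine Finset.sum_le_sum (fun t _ => ?_)
          exact toReal_prob_le_one μ _
      _ = ((Finset.Icc 1 n).filter (fun t => t ≤ T)).card := by
          rw [Finset.sum_const, nsmul_eq_mul, mul_one]
      _ ≤ (T:ℝ) := by
          have hsub : (Finset.Icc 1 n).filter (fun t => t ≤ T) ⊆ Finset.Icc 1 T := by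
            intro t ht
            rw [Finset.mem_filter, Finset.mem_Icc] at ht
            rw [Finset.mem_Icc]
            exact ⟨ht.1.1, ht.2⟩
          have := Finset.card_le_card hsub
          rw [Nat.card_Icc] at this
          exact_mod_cast le_trans this (by omega)
  have htail : ∑ t ∈ (Finset.Icc 1 n).filter (fun t => ¬ t ≤ T), P t
      ≤ 1 / b ^ 2 * (Real.sqrt (π * c * d / 2) + 1 / 2) := by
    calc ∑ t ∈ (Finset.Icc 1 n).filter (fun t => ¬ t ≤ T), P t
        ≤ ∑ t ∈ (Finset.Icc 1 n).filter (fun t => ¬ t ≤ T),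
            Real.exp (-2 * (b * Real.sqrt t - Real.sqrt (c * d)) ^ 2) := by
          refine Finset.sum_le_sum (fun t ht => ?_)
          rw [Finset.mem_filter, Finset.mem_Icc] at ht
          obtain ⟨⟨ht1, _⟩, ht2⟩ := ht
          have ht0 : 0 < t := ht1
          have htR : (0:ℝ) < t := by exact_mod_cast ht0
          have hTt : (T:ℝ) < (t:ℝ) := by exact_mod_cast Nat.lt_of_not_le (by simpa using ht2)
          have hcdt : c * d / (t:ℝ) < b ^ 2 := by
            rw [div_lt_iff₀ htR]
            rw [div_le_iff₀ (by positivity)] at hTge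
            nlinarith [mul_lt_mul_of_pos_right hTt (by positivity : (0:ℝ) < b ^ 2)]
          have hε : 0 ≤ b - Real.sqrt (c * d / t) := by
            rw [sub_nonneg]
            calc Real.sqrt (c * d / t) ≤ Real.sqrt (b ^ 2) := Real.sqrt_le_sqrt hcdt.le
              _ = b := Real.sqrt_sq hb.le
          have hmain := hoeffding_sum μ X hmeas hindep hrange m hmean t ht0 _ hε
          refine hmain.trans (le_of_eq ?_)
          congr 1
          have hst : Real.sqrt ((t:ℝ)) ^ 2 = (t:ℝ) := Real.sq_sqrt htR.le
          have hstpos : 0 < Real.sqrt (t:ℝ) := Real.sqrt_pos.mpr htR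
          have hdiv : Real.sqrt (c * d / t) = Real.sqrt (c * d) / Real.sqrt (t:ℝ) := by
            rw [Real.sqrt_div (by positivity)]
          rw [hdiv]
          rw [← hst]
          field_simp
          rw [Real.sqrt_sq hstpos.le]
      _ ≤ ∑ t ∈ Finset.Icc (T + 1) n,
            Real.exp (-2 * (b * Real.sqrt t - Real.sqrt (c * d)) ^ 2) := by
          refine Finset.sum_le_sum_of_subset_of_nonneg ?_ (fun t _ _ => (Real.exp_pos _).le)
          intro t ht
          rw [Finset.mem_filter, Finset.mem_Icc] at ht
          rw [Finset.mem_Icc]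
          omega
      _ ≤ 1 / b ^ 2 * (Real.sqrt (π * c * d / 2) + 1 / 2) :=
          tail_sum_le b c d hb hc hd T n hT1 hTge
  have hexpand : (1 / b ^ 2) * (c * d + Real.sqrt (π * c * d / 2) + 1 / 2)
      = c * d / b ^ 2 + 1 / b ^ 2 * (Real.sqrt (π * c * d / 2) + 1 / 2) := by ring
  linarith
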